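/- For every m×n complex matrix s, the linear map Ad_s : M_m(ℂ) → M_n(ℂ) defined by Ad_s(x) = s* x s is an exposed positive linear map, i.e., it generates an exposed ray of the convex cone of all positive linear maps from M_m(ℂ) to M_n(ℂ). -/

import Mathlib

open Matrix ComplexOrder

noncomputable section

/-- A linear map between matrix algebras is positive if it sends positive
semidefinite matrices to positive semidefinite matrices. -/
def IsPosMap {m n : ℕ} (φ : Matrix (Fin m) (Fin m) ℂ →ₗ[ℂ] Matrix (Fin n) (Fin n) ℂ) : Prop :=
  ∀ a : Matrix (Fin m) (Fin m) ℂ, a.PosSemidef → (φ a).PosSemidef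

/-- A positive linear map `φ` is exposed (generates an exposed ray of the cone of
positive maps) if every positive map `ψ` such that `⟨η, φ(a) η⟩ = 0` implies
`⟨η, ψ(a) η⟩ = 0` (for `a` positive semidefinite) is a nonnegative multiple of `φ`. -/
def IsExposedMap {m n : ℕ} (φ : Matrix (Fin m) (Fin m) ℂ →ₗ[ℂ] Matrix (Fin n) (Fin n) ℂ) :
    Prop :=
  IsPosMap φ ∧
    ∀ ψ : Matrix (Fin m) (Fin m) ℂ →ₗ[ℂ] Matrix (Fin n) (Fin n) ℂ, IsPosMap ψ →
      (∀ a : Matrix (Fin m) (Fin m) ℂ, a.PosSemidef → ∀ η : Fin n → ℂ,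
        star η ⬝ᵥ (φ a) *ᵥ η = 0 → star η ⬝ᵥ (ψ a) *ᵥ η = 0) →
      ∃ c : ℝ, 0 ≤ c ∧ ψ = (c : ℂ) • φ

/-- The map `Ad_s : x ↦ s* x s`. -/
def adMap {m n : ℕ} (s : Matrix (Fin m) (Fin n) ℂ) :
    Matrix (Fin m) (Fin m) ℂ →ₗ[ℂ] Matrix (Fin n) (Fin n) ℂ where
  toFun x := sᴴ * x * s
  map_add' x y := by simp [Matrix.add_mul, Matrix.mul_add]
  map_smul' c x := by simp [Matrix.smul_mul, Matrix.mul_smul]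

/-- The transpose map on matrices, as a linear map. -/
def transposeLM (m : ℕ) : Matrix (Fin m) (Fin m) ℂ →ₗ[ℂ] Matrix (Fin m) (Fin m) ℂ where
  toFun x := xᵀ
  map_add' x y := Matrix.transpose_add x y
  map_smul' c x := by simp

/-! ### Auxiliary lemmas -/


lemma vmv_mulVec {k : ℕ} (u v w : Fin k → ℂ) :
    vecMulVec u v *ᵥ w = (v ⬝ᵥ w) • u := by
  ext i
  simp [vecMulVec_apply, mulVec, dotProduct, Finset.mul_sum, mul_comm, mul_left_comm]

lemma conj_dot {k : ℕ} (u v : Fin k → ℂ) :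
    star u ⬝ᵥ v = star (star v ⬝ᵥ u) := by
  simp [dotProduct, mul_comm]

lemma quad_vmv {k : ℕ} (w η : Fin k → ℂ) :
    star η ⬝ᵥ (vecMulVec w (star w)) *ᵥ η = (star η ⬝ᵥ w) * (star w ⬝ᵥ η) := by
  rw [vmv_mulVec, dotProduct_smul, smul_eq_mul, mul_comm]

lemma posSemidef_vmv {k : ℕ} (ξ : Fin k → ℂ) : (vecMulVec ξ (star ξ)).PosSemidef := by
  refine Matrix.PosSemidef.of_dotProduct_mulVec_nonneg ?_ ?_
  · ext i j
    simp [conjTranspose_apply, vecMulVec_apply, mul_comm]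
  · intro x
    rw [quad_vmv, conj_dot]
    exact star_mul_self_nonneg _

lemma vmv_zero_left {k l : ℕ} (v : Fin l → ℂ) :
    vecMulVec (0 : Fin k → ℂ) v = 0 := by
  ext i j
  simp [vecMulVec_apply]

lemma realparam {B : ℂ} {r : ℝ} (hr : 0 ≤ r)
    (h : ∀ t : ℝ, 0 ≤ (t : ℂ) * B + (t : ℂ) ^ 2 * (r : ℂ)) : B = 0 := by
  have him : B.im = 0 := by
    have h1 := (Complex.le_def.mp (h 1)).2
    simpa using h1.symm
  have hre : ∀ t : ℝ, 0 ≤ t * B.re + t ^ 2 * r := by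
    intro t
    have h1 := (Complex.le_def.mp (h t)).1
    simpa [Complex.add_re, Complex.mul_re, him, ← Complex.ofReal_pow] using h1
  have hr1 : (0:ℝ) < r + 1 := by linarith
  have h2 := hre (-B.re / (r + 1))
  have hBre : B.re = 0 := by
    have h3 : 0 ≤ (-B.re / (r + 1) * B.re + (-B.re / (r + 1)) ^ 2 * r) * (r+1)^2 :=
      mul_nonneg h2 (by positivity)
    have h4 : (-B.re / (r + 1) * B.re + (-B.re / (r + 1)) ^ 2 * r) * (r+1)^2
        = -(B.re^2) * (r+1) + B.re^2 * r := by
      field_simp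
    rw [h4] at h3
    nlinarith [sq_nonneg B.re]
  exact Complex.ext hBre him

lemma nonneg_complex_real {z : ℂ} (hz : 0 ≤ z) : ∃ r : ℝ, 0 ≤ r ∧ z = (r : ℂ) := by
  refine ⟨z.re, by simpa using (Complex.le_def.mp hz).1, ?_⟩
  apply Complex.ext
  · simp
  · simpa using (Complex.le_def.mp hz).2.symm

lemma ext_mulVec {k l : ℕ} {A B : Matrix (Fin k) (Fin l) ℂ}
    (h : ∀ v, A *ᵥ v = B *ᵥ v) : A = B := by
  ext i j
  have := congrFun (h (Pi.single j 1)) i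
  simpa [mulVec_single] using this

lemma vmv_expand {k : ℕ} (x y : Fin k → ℂ) (t : ℂ) :
    vecMulVec (x + t • y) (star (x + t • y)) =
      vecMulVec x (star x) + t • vecMulVec y (star x) + (star t) • vecMulVec x (star y)
        + (t * star t) • vecMulVec y (star y) := by
  ext i j
  simp only [vecMulVec_apply, Matrix.add_apply, Matrix.smul_apply, Pi.add_apply, Pi.smul_apply,
    Pi.star_apply, star_add, star_mul', smul_eq_mul, star_smul]
  ring

lemma psd_kernel_rankOne {k : ℕ} {M : Matrix (Fin k) (Fin k) ℂ} (hM : M.PosSemidef)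
    (w : Fin k → ℂ) (h : ∀ η, star w ⬝ᵥ η = 0 → M *ᵥ η = 0) :
    ∃ lam : ℝ, 0 ≤ lam ∧ M = (lam : ℂ) • vecMulVec w (star w) := by
  by_cases hw : w = 0
  · refine ⟨0, le_refl _, ?_⟩
    apply ext_mulVec
    intro v
    rw [h v (by simp [hw])]
    simp
  · set nw : ℂ := star w ⬝ᵥ w with hnwdef
    have hnw : nw ≠ 0 := fun h0 => hw (dotProduct_star_self_eq_zero.mp h0)
    have hnwr : star nw = nw := by rw [hnwdef]; exact (conj_dot w w).symm
    have hMw0 : ∀ η, star w ⬝ᵥ η = 0 → star η ⬝ᵥ (M *ᵥ w) = 0 := by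
      intro η hη
      rw [dotProduct_mulVec]
      have hrw : star η ᵥ* M = star (M *ᵥ η) := by rw [star_mulVec, hM.isHermitian.eq]
      rw [hrw, h η hη]
      simp
    set u := M *ᵥ w with hu
    set α : ℂ := (star w ⬝ᵥ u) / nw with hα
    set η₀ := u - α • w with hη₀def
    have hη₀w : star w ⬝ᵥ η₀ = 0 := by
      rw [hη₀def, dotProduct_sub, dotProduct_smul, smul_eq_mul, hα]
      field_simp
      simp [hnwdef]
    have h1 : star η₀ ⬝ᵥ u = 0 := hMw0 η₀ hη₀w
    have h2 : star η₀ ⬝ᵥ w = 0 := by rw [conj_dot, hη₀w, star_zero]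
    have h3 : star η₀ ⬝ᵥ η₀ = 0 := by
      rw [hη₀def, dotProduct_sub, h1, dotProduct_smul, h2]
      simp
    have hη₀ : η₀ = 0 := dotProduct_star_self_eq_zero.mp h3
    have huw : u = α • w := by rwa [hη₀def, sub_eq_zero] at hη₀
    have hwu : (0:ℂ) ≤ star w ⬝ᵥ u := hM.dotProduct_mulVec_nonneg w
    have hnwpos : (0:ℂ) ≤ nw := dotProduct_star_self_nonneg w
    obtain ⟨a, ha, haeq⟩ := nonneg_complex_real hwu
    obtain ⟨b, hb, hbeq⟩ := nonneg_complex_real hnwpos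
    have hbne : b ≠ 0 := fun h0 => hnw (by rw [hbeq, h0]; simp)
    refine ⟨a / b ^ 2, by positivity, ?_⟩
    apply ext_mulVec
    intro v
    set β : ℂ := (star w ⬝ᵥ v) / nw with hβ
    have hv' : star w ⬝ᵥ (v - β • w) = 0 := by
      rw [dotProduct_sub, dotProduct_smul, smul_eq_mul, hβ]
      field_simp
      simp [hnwdef]
    have hMv' : M *ᵥ (v - β • w) = 0 := h _ hv'
    have hMv : M *ᵥ v = β • u := by
      have := hMv'
      rw [mulVec_sub, sub_eq_zero] at this
      rw [this, mulVec_smul, hu]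
    rw [hMv, huw, smul_smul, Matrix.smul_mulVec, vmv_mulVec, smul_smul]
    congr 1
    rw [hβ, hα, haeq, hbeq]
    field_simp
    have hb' : (b:ℂ) ≠ 0 := by exact_mod_cast hbne
    push_cast
    field_simp

lemma starPiSingle {k : ℕ} (j : Fin k) :
    star (Pi.single j (1:ℂ) : Fin k → ℂ) = (Pi.single j (1:ℂ) : Fin k → ℂ) := by
  funext a
  rcases eq_or_ne a j with rfl | hne
  · simp
  · simp [Pi.single_apply, hne]

lemma linearMap_eq_zero_of_rankOne {k l : ℕ}
    (Δ : Matrix (Fin k) (Fin k) ℂ →ₗ[ℂ] Matrix (Fin l) (Fin l) ℂ)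
    (h : ∀ ξ, Δ (vecMulVec ξ (star ξ)) = 0) : Δ = 0 := by
  have hxy : ∀ x y : Fin k → ℂ, Δ (vecMulVec x (star y)) = 0 := by
    intro x y
    have e1 : Δ (vecMulVec y (star x)) + Δ (vecMulVec x (star y)) = 0 := by
      have := h (x + (1:ℂ) • y)
      rw [vmv_expand] at this
      simpa [h x, h y, map_add] using this
    have e2 : Complex.I • Δ (vecMulVec y (star x))
        + (-Complex.I) • Δ (vecMulVec x (star y)) = 0 := by
      have := h (x + Complex.I • y)
      rw [vmv_expand] at this
      simpa [h x, h y, map_add, Complex.star_def, Complex.conj_I] using this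
    have hBA : Δ (vecMulVec y (star x)) = Δ (vecMulVec x (star y)) := by
      have e3 : Complex.I • Δ (vecMulVec y (star x))
          = Complex.I • Δ (vecMulVec x (star y)) := by
        have := e2
        rw [neg_smul, add_neg_eq_zero] at this
        exact this
      exact smul_right_injective _ Complex.I_ne_zero e3
    have e4 : (2:ℂ) • Δ (vecMulVec x (star y)) = 0 := by
      rw [two_smul]
      rw [hBA] at e1
      exact e1
    rcases smul_eq_zero.mp e4 with h2 | h2
    · exact absurd h2 two_ne_zero
    · exact h2
  apply LinearMap.ext
  intro x
  rw [show x = ∑ i, ∑ j, Matrix.single i j (x i j) from matrix_eq_sum_single x]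
  rw [map_sum]
  simp only [map_sum, LinearMap.zero_apply]
  apply Finset.sum_congr rfl
  intro i _
  apply Finset.sum_congr rfl
  intro j _
  have : Matrix.single i j (x i j) = x i j • Matrix.single i j 1 := by
    rw [smul_single, smul_eq_mul, mul_one]
  rw [this, _root_.map_smul,
    show (Matrix.single i j (1:ℂ)) = vecMulVec (Pi.single i 1) (star (Pi.single j 1)) by
      rw [starPiSingle]; exact single_eq_single_vecMulVec_single i j,
    hxy, smul_zero]

lemma adMap_apply {m n : ℕ} (s : Matrix (Fin m) (Fin n) ℂ) (x) :
    adMap s x = sᴴ * x * s := rfl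

lemma quad_adMap {m n : ℕ} (s : Matrix (Fin m) (Fin n) ℂ) (x : Matrix (Fin m) (Fin m) ℂ)
    (η : Fin n → ℂ) :
    star η ⬝ᵥ (adMap s x) *ᵥ η = star (s *ᵥ η) ⬝ᵥ x *ᵥ (s *ᵥ η) := by
  rw [adMap_apply]
  simp only [star_mulVec, dotProduct_mulVec, vecMul_vecMul]

lemma star_conjT_mulVec {m n : ℕ} (s : Matrix (Fin m) (Fin n) ℂ) (ξ : Fin m → ℂ)
    (η : Fin n → ℂ) :
    star (sᴴ *ᵥ ξ) ⬝ᵥ η = star ξ ⬝ᵥ (s *ᵥ η) := by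
  rw [star_mulVec, conjTranspose_conjTranspose, dotProduct_mulVec]

lemma adMap_vmv {m n : ℕ} (s : Matrix (Fin m) (Fin n) ℂ) (x y : Fin m → ℂ) :
    adMap s (vecMulVec x (star y)) = vecMulVec (sᴴ *ᵥ x) (star (sᴴ *ᵥ y)) := by
  rw [adMap_apply]
  ext i j
  simp only [mul_apply, vecMulVec_apply, conjTranspose_apply, mulVec, dotProduct,
    Pi.star_apply, star_sum, star_mul', star_star, Finset.sum_mul, Finset.mul_sum]
  apply Finset.sum_congr rfl
  intro a _
  apply Finset.sum_congr rfl
  intro b _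
  ring

/-- The quadratic functional `x ↦ ⟨η, ψ(x) η⟩` as a linear map. -/
def quadPsi {k l : ℕ} (ψ : Matrix (Fin k) (Fin k) ℂ →ₗ[ℂ] Matrix (Fin l) (Fin l) ℂ)
    (η : Fin l → ℂ) : Matrix (Fin k) (Fin k) ℂ →ₗ[ℂ] ℂ where
  toFun x := star η ⬝ᵥ (ψ x) *ᵥ η
  map_add' x y := by simp [map_add, add_mulVec, dotProduct_add]
  map_smul' c x := by simp [smul_mulVec]

lemma quadPsi_apply {k l : ℕ} (ψ : Matrix (Fin k) (Fin k) ℂ →ₗ[ℂ] Matrix (Fin l) (Fin l) ℂ)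
    (η : Fin l → ℂ) (x) : quadPsi ψ η x = star η ⬝ᵥ (ψ x) *ᵥ η := rfl

/-- (Marciniak) For every `m × n` complex matrix `s`, the map `Ad_s : x ↦ s* x s`
generates an exposed ray of the cone of positive linear maps from `M_m(ℂ)` to `M_n(ℂ)`. -/
theorem adMap_isExposed (m n : ℕ) (s : Matrix (Fin m) (Fin n) ℂ) :
    IsExposedMap (adMap s) := by
  constructor
  · intro a ha
    exact ha.conjTranspose_mul_mul_same s
  intro ψ hψ hz
  -- Step 1: rank one images
  have key : ∀ ξ : Fin m → ℂ, ∃ lam : ℝ, 0 ≤ lam ∧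
      ψ (vecMulVec ξ (star ξ)) = (lam : ℂ) • vecMulVec (sᴴ *ᵥ ξ) (star (sᴴ *ᵥ ξ)) := by
    intro ξ
    apply psd_kernel_rankOne (hψ _ (posSemidef_vmv ξ)) (sᴴ *ᵥ ξ)
    intro η hη
    rw [← (hψ _ (posSemidef_vmv ξ)).dotProduct_mulVec_zero_iff]
    apply hz _ (posSemidef_vmv ξ) η
    rw [quad_adMap, quad_vmv]
    rw [star_conjT_mulVec] at hη
    rw [hη, mul_zero]
  choose lam hlam hpsi using key
  -- the quadratic functional
  set q : (Fin n → ℂ) → Matrix (Fin m) (Fin m) ℂ →ₗ[ℂ] ℂ := fun η => quadPsi ψ η with hqdef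
  have hA0 : ∀ (η : Fin n → ℂ) (x : Fin m → ℂ), star x ⬝ᵥ (s *ᵥ η) = 0 →
      q η (vecMulVec x (star x)) = 0 := by
    intro η x hx
    apply hz _ (posSemidef_vmv x) η
    rw [quad_adMap, quad_vmv, hx, mul_zero]
  have hApos : ∀ (η : Fin n → ℂ) (x : Fin m → ℂ), 0 ≤ q η (vecMulVec x (star x)) :=
    fun η x => (hψ _ (posSemidef_vmv x)).dotProduct_mulVec_nonneg η
  -- degenerate Cauchy-Schwarz
  have hCS : ∀ (η : Fin n → ℂ) (x : Fin m → ℂ), star x ⬝ᵥ (s *ᵥ η) = 0 →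
      q η (vecMulVec (s *ᵥ η) (star x)) = 0 ∧ q η (vecMulVec x (star (s *ᵥ η))) = 0 := by
    intro η x hx
    set v := s *ᵥ η with hv
    obtain ⟨r, hr, hreq⟩ := nonneg_complex_real (hApos η v)
    have hB1 : q η (vecMulVec v (star x)) + q η (vecMulVec x (star v)) = 0 := by
      apply realparam hr
      intro t
      have h1 := hApos η (x + (t:ℂ) • v)
      rw [vmv_expand, map_add, map_add, map_add, _root_.map_smul, _root_.map_smul,
        _root_.map_smul, hA0 η x hx, hreq] at h1
      have hst : star ((t:ℂ)) = (t:ℂ) := by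
        rw [Complex.star_def, Complex.conj_ofReal]
      rw [hst] at h1
      have heq : (t:ℂ) * (q η (vecMulVec v (star x)) + q η (vecMulVec x (star v)))
          + (t:ℂ)^2 * (r:ℂ)
          = 0 + (t:ℂ) • q η (vecMulVec v (star x)) + (t:ℂ) • q η (vecMulVec x (star v))
            + ((t:ℂ) * (t:ℂ)) • (r:ℂ) := by
        simp only [smul_eq_mul]
        ring
      rw [heq]
      exact h1
    have hB2 : Complex.I * (q η (vecMulVec v (star x)) - q η (vecMulVec x (star v))) = 0 := by
      apply realparam hr
      intro t
      have h1 := hApos η (x + ((t:ℂ) * Complex.I) • v)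
      rw [vmv_expand, map_add, map_add, map_add, _root_.map_smul, _root_.map_smul,
        _root_.map_smul, hA0 η x hx, hreq] at h1
      have hst : star ((t:ℂ) * Complex.I) = -((t:ℂ) * Complex.I) := by
        rw [star_mul', Complex.star_def, Complex.conj_I, Complex.conj_ofReal]
        ring
      rw [hst] at h1
      have heq : (t:ℂ) * (Complex.I * (q η (vecMulVec v (star x))
            - q η (vecMulVec x (star v)))) + (t:ℂ)^2 * (r:ℂ)
          = 0 + ((t:ℂ) * Complex.I) • q η (vecMulVec v (star x))
            + (-((t:ℂ) * Complex.I)) • q η (vecMulVec x (star v))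
            + (((t:ℂ) * Complex.I) * -((t:ℂ) * Complex.I)) • (r:ℂ) := by
        simp only [smul_eq_mul]
        have : Complex.I * Complex.I = -1 := Complex.I_mul_I
        ring_nf
        rw [Complex.I_sq]
        ring
      rw [heq]
      exact h1
    have hsub : q η (vecMulVec v (star x)) = q η (vecMulVec x (star v)) := by
      rcases mul_eq_zero.mp hB2 with h2 | h2
      · exact absurd h2 Complex.I_ne_zero
      · rwa [sub_eq_zero] at h2
    constructor
    · rw [hsub] at hB1 ⊢
      have := add_self_eq_zero.mp hB1
      exact this
    · rw [hsub] at hB1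
      exact add_self_eq_zero.mp hB1
  -- value formula
  have hval : ∀ (η : Fin n → ℂ) (ξ : Fin m → ℂ), s *ᵥ η ≠ 0 →
      q η (vecMulVec ξ (star ξ))
        = ((star (s *ᵥ η) ⬝ᵥ ξ) / (star (s *ᵥ η) ⬝ᵥ (s *ᵥ η)))
          * star ((star (s *ᵥ η) ⬝ᵥ ξ) / (star (s *ᵥ η) ⬝ᵥ (s *ᵥ η)))
          * q η (vecMulVec (s *ᵥ η) (star (s *ᵥ η))) := by
    intro η ξ hvne
    set v := s *ᵥ η with hv
    set nv : ℂ := star v ⬝ᵥ v with hnv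
    have hnvne : nv ≠ 0 := fun h0 => hvne (dotProduct_star_self_eq_zero.mp h0)
    have hnvr : star nv = nv := by rw [hnv]; exact (conj_dot v v).symm
    set α : ℂ := (star v ⬝ᵥ ξ) / nv with hα
    set ξ' := ξ - α • v with hξ'
    have h0 : star v ⬝ᵥ ξ' = 0 := by
      rw [hξ', dotProduct_sub, dotProduct_smul, smul_eq_mul, hα]
      field_simp
      simp [hnv]
    have hξ'v : star ξ' ⬝ᵥ v = 0 := by rw [conj_dot, h0, star_zero]
    have hξeq : ξ = ξ' + α • v := by rw [hξ']; abel
    rw [hξeq, vmv_expand, map_add, map_add, map_add, _root_.map_smul, _root_.map_smul,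
      _root_.map_smul, hA0 η ξ' hξ'v, (hCS η ξ' hξ'v).1, (hCS η ξ' hξ'v).2]
    simp only [smul_eq_mul, mul_zero, add_zero, zero_add]
  -- value of q on rank-ones via hpsi
  have hq_rank : ∀ (η : Fin n → ℂ) (ξ : Fin m → ℂ),
      q η (vecMulVec ξ (star ξ))
        = (lam ξ : ℂ) * (star (star ξ ⬝ᵥ (s *ᵥ η)) * (star ξ ⬝ᵥ (s *ᵥ η))) := by
    intro η ξ
    show star η ⬝ᵥ (ψ (vecMulVec ξ (star ξ))) *ᵥ η = _
    rw [hpsi ξ, Matrix.smul_mulVec, dotProduct_smul, smul_eq_mul, quad_vmv]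
    congr 1
    rw [conj_dot η (sᴴ *ᵥ ξ), star_conjT_mulVec]
  -- constancy of lam
  have hconst : ∀ ξ₁ ξ₂ : Fin m → ℂ, sᴴ *ᵥ ξ₁ ≠ 0 → sᴴ *ᵥ ξ₂ ≠ 0 → lam ξ₁ = lam ξ₂ := by
    intro ξ₁ ξ₂ h1 h2
    obtain ⟨η, hp1, hp2⟩ : ∃ η : Fin n → ℂ,
        star ξ₁ ⬝ᵥ (s *ᵥ η) ≠ 0 ∧ star ξ₂ ⬝ᵥ (s *ᵥ η) ≠ 0 := by
      have e1 : star ξ₁ ⬝ᵥ (s *ᵥ (sᴴ *ᵥ ξ₁)) ≠ 0 := by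
        rw [← star_conjT_mulVec]
        exact fun h0 => h1 (dotProduct_star_self_eq_zero.mp h0)
      have e2 : star ξ₂ ⬝ᵥ (s *ᵥ (sᴴ *ᵥ ξ₂)) ≠ 0 := by
        rw [← star_conjT_mulVec]
        exact fun h0 => h2 (dotProduct_star_self_eq_zero.mp h0)
      by_cases hc1 : star ξ₂ ⬝ᵥ (s *ᵥ (sᴴ *ᵥ ξ₁)) ≠ 0
      · exact ⟨sᴴ *ᵥ ξ₁, e1, hc1⟩
      by_cases hc2 : star ξ₁ ⬝ᵥ (s *ᵥ (sᴴ *ᵥ ξ₂)) ≠ 0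
      · exact ⟨sᴴ *ᵥ ξ₂, hc2, e2⟩
      push_neg at hc1 hc2
      refine ⟨sᴴ *ᵥ ξ₁ + sᴴ *ᵥ ξ₂, ?_, ?_⟩
      · rw [mulVec_add, dotProduct_add, hc2, add_zero]; exact e1
      · rw [mulVec_add, dotProduct_add, hc1, zero_add]; exact e2
    have hvne : s *ᵥ η ≠ 0 := by
      intro h0
      rw [h0] at hp1
      simp at hp1
    set v := s *ᵥ η with hvdef
    set nv : ℂ := star v ⬝ᵥ v with hnvdef
    have hnvne : nv ≠ 0 := fun h0 => hvne (dotProduct_star_self_eq_zero.mp h0)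
    have hnvr : star nv = nv := by rw [hnvdef]; exact (conj_dot v v).symm
    set Q := q η (vecMulVec v (star v)) with hQdef
    have key2 : ∀ ξ : Fin m → ℂ, star ξ ⬝ᵥ v ≠ 0 → (lam ξ : ℂ) * (nv * nv) = Q := by
      intro ξ hp
      have ha := hval η ξ hvne
      rw [hq_rank η ξ] at ha
      rw [← hvdef, ← hnvdef, ← hQdef] at ha
      have hsvξ : star v ⬝ᵥ ξ = star (star ξ ⬝ᵥ v) := conj_dot v ξ
      set p := star ξ ⬝ᵥ v with hpdef
      rw [hsvξ, star_div₀, star_star, hnvr] at ha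
      have hps : star p * p ≠ 0 := mul_ne_zero (star_ne_zero.mpr hp) hp
      have hcan : (star p * p) * ((lam ξ : ℂ) * (nv * nv)) = (star p * p) * Q := by
        calc (star p * p) * ((lam ξ : ℂ) * (nv * nv))
            = ((lam ξ : ℂ) * (star p * p)) * (nv * nv) := by ring
          _ = (star p / nv * (p / nv) * Q) * (nv * nv) := by rw [ha]
          _ = (star p * p) * Q := by field_simp
      exact mul_left_cancel₀ hps hcan
    have hc1 := key2 ξ₁ hp1
    have hc2 := key2 ξ₂ hp2
    have : (lam ξ₁ : ℂ) * (nv * nv) = (lam ξ₂ : ℂ) * (nv * nv) := by rw [hc1, hc2]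
    have := mul_right_cancel₀ (mul_ne_zero hnvne hnvne) this
    exact_mod_cast this
  -- final assembly
  by_cases hex : ∃ ξ₀ : Fin m → ℂ, sᴴ *ᵥ ξ₀ ≠ 0
  · obtain ⟨ξ₀, hξ₀⟩ := hex
    refine ⟨lam ξ₀, hlam ξ₀, ?_⟩
    have hΔ : ∀ ξ : Fin m → ℂ,
        (ψ - ((lam ξ₀ : ℝ) : ℂ) • adMap s) (vecMulVec ξ (star ξ)) = 0 := by
      intro ξ
      simp only [LinearMap.sub_apply, LinearMap.smul_apply]
      rw [hpsi ξ, adMap_vmv]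
      by_cases hξ : sᴴ *ᵥ ξ = 0
      · rw [hξ, vmv_zero_left]
        simp
      · rw [hconst ξ ξ₀ hξ hξ₀, sub_self]
    have hzero := linearMap_eq_zero_of_rankOne _ hΔ
    rw [sub_eq_zero] at hzero
    exact hzero
  · push_neg at hex
    refine ⟨0, le_refl 0, ?_⟩
    have hΔ : ∀ ξ : Fin m → ℂ,
        (ψ - ((0 : ℝ) : ℂ) • adMap s) (vecMulVec ξ (star ξ)) = 0 := by
      intro ξ
      simp only [LinearMap.sub_apply, LinearMap.smul_apply]
      rw [hpsi ξ, hex ξ, vmv_zero_left]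
      simp
    have hzero := linearMap_eq_zero_of_rankOne _ hΔ
    rw [sub_eq_zero] at hzero
    exact hzero

end
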